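/- For every continuous f : [0,1] → ℝ with f(0) = f(1) = 0 and every d ∈ (0,1] with d ∉ S(f), the Lebesgue measure of S(f) ∩ [0,d] is strictly greater than d/2. -/

import Mathlib

def chordSet (f : ℝ → ℝ) : Set ℝ :=
  {ℓ | ℓ ∈ Set.Icc (0:ℝ) 1 ∧ ∃ s ∈ Set.Icc (0:ℝ) 1, s + ℓ ∈ Set.Icc (0:ℝ) 1 ∧ f s = f (s + ℓ)}

open Set MeasureTheory

namespace ChordAux

lemma chordSet_neg (f : ℝ → ℝ) : chordSet (fun x => - f x) = chordSet f := by
  ext ℓ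
  simp only [chordSet, mem_setOf_eq, neg_inj]

lemma vol_preimage_const_sub (c : ℝ) (X : Set ℝ) :
    volume ((fun t => c - t) ⁻¹' X) = volume X := by
  have : (fun t : ℝ => c - t) ⁻¹' X = (fun t : ℝ => -t) ⁻¹' ((fun t : ℝ => c + t) ⁻¹' X) := by
    ext t; simp [sub_eq_add_neg, add_comm]
  rw [this, Measure.measure_preimage_neg, measure_preimage_add]

/-- positive non-chord lengths -/
def Cp (F : ℝ → ℝ) (x : ℝ) : Prop :=
  x ∈ Set.Ioc (0:ℝ) 1 ∧ x ∉ chordSet F ∧ 0 < F x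

/-- negative non-chord lengths -/
def Cm (F : ℝ → ℝ) (x : ℝ) : Prop :=
  x ∈ Set.Ioc (0:ℝ) 1 ∧ x ∉ chordSet F ∧ F x < 0

lemma Cp_neg_iff (F : ℝ → ℝ) (x : ℝ) : Cp (fun t => - F t) x ↔ Cm F x := by
  simp only [Cp, Cm, chordSet_neg, neg_pos]

lemma gpos {F : ℝ → ℝ} (hF : Continuous F) (h0 : F 0 = 0) {x : ℝ}
    (hx : Cp F x) {s : ℝ} (hs : 0 ≤ s) (hsx : s + x ≤ 1) : F s < F (s + x) := by
  by_contra hcon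
  push_neg at hcon
  set g : ℝ → ℝ := fun t => F (t + x) - F t with hg
  have hgc : ContinuousOn g (Icc 0 s) := by
    exact ((hF.comp (continuous_add_right x)).sub hF).continuousOn
  have h1 : g s ≤ 0 := by simp [hg]; linarith
  have h2 : 0 ≤ g 0 := by
    simp only [hg, zero_add, h0, sub_zero]
    exact le_of_lt hx.2.2
  have : (0:ℝ) ∈ Icc (g s) (g 0) := ⟨h1, h2⟩
  obtain ⟨t, ht, hgt⟩ := intermediate_value_Icc' hs hgc this
  apply hx.2.1
  have hxIoc := hx.1
  have hts : t ≤ s := ht.2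
  have ht0 : 0 ≤ t := ht.1
  have hx0 : 0 < x := hxIoc.1
  refine ⟨⟨le_of_lt hx0, hxIoc.2⟩, t, ⟨ht0, by linarith⟩, ⟨by linarith, by linarith⟩, ?_⟩
  have : F (t + x) - F t = 0 := hgt
  linarith

lemma gneg {F : ℝ → ℝ} (hF : Continuous F) (h0 : F 0 = 0) {x : ℝ}
    (hx : Cm F x) {s : ℝ} (hs : 0 ≤ s) (hsx : s + x ≤ 1) : F (s + x) < F s := by
  have := gpos (F := fun t => - F t) (hF.neg) (by simp [h0]) ((Cp_neg_iff F x).mpr hx) hs hsx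
  simpa using this

lemma add_Cp {F : ℝ → ℝ} (hF : Continuous F) (h0 : F 0 = 0) {x y : ℝ}
    (hx : Cp F x) (hy : Cp F y) (hxy : x + y ≤ 1) : Cp F (x + y) := by
  have hx0 : 0 < x := hx.1.1
  have hy0 : 0 < y := hy.1.1
  refine ⟨⟨by linarith, hxy⟩, ?_, ?_⟩
  · rintro ⟨-, s, hs, hsxy, heq⟩
    have hs1 : 0 ≤ s := hs.1
    have hs2 : s + (x + y) ≤ 1 := hsxy.2
    have h1 : F s < F (s + x) := gpos hF h0 hx hs1 (by linarith)
    have h2 : F (s + x) < F ((s + x) + y) := gpos hF h0 hy (by linarith) (by linarith)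
    rw [show (s + x) + y = s + (x + y) by ring] at h2
    rw [heq] at h1
    linarith
  · have h1 : F 0 < F x := by
      have := gpos hF h0 hx (le_refl 0) (by linarith)
      simpa using this
    have h2 : F x < F (x + y) := gpos hF h0 hy (le_of_lt hx0) hxy
    rw [h0] at h1
    linarith

lemma add_Cm {F : ℝ → ℝ} (hF : Continuous F) (h0 : F 0 = 0) {x y : ℝ}
    (hx : Cm F x) (hy : Cm F y) (hxy : x + y ≤ 1) : Cm F (x + y) := by
  have := add_Cp (F := fun t => - F t) (hF.neg) (by simp [h0])
    ((Cp_neg_iff F x).mpr hx) ((Cp_neg_iff F y).mpr hy) hxy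
  exact (Cp_neg_iff F (x + y)).mp this

lemma mixed {F : ℝ → ℝ} (hF : Continuous F) (h0 : F 0 = 0) {x y : ℝ}
    (hx : Cp F x) (hy : Cm F y) : 1 < x + y := by
  obtain ⟨p, hp, hmin⟩ := isCompact_Icc.exists_isMinOn (nonempty_Icc.mpr zero_le_one)
    hF.continuousOn
  have hmin' : ∀ q ∈ Icc (0:ℝ) 1, F p ≤ F q := fun q hq => hmin hq
  have hpx : p < x := by
    by_contra hcon
    push_neg at hcon
    have h1 : F (p - x) < F ((p - x) + x) := by
      refine gpos hF h0 hx (by linarith) (by rcases hp with ⟨-, h⟩; linarith)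
    rw [show (p - x) + x = p by ring] at h1
    have := hmin' (p - x) ⟨by linarith, by rcases hp with ⟨-, h⟩; nlinarith [hx.1.1]⟩
    linarith
  have hpy : 1 - y < p := by
    by_contra hcon
    push_neg at hcon
    have h1 : F (p + y) < F p := gneg hF h0 hy hp.1 (by linarith)
    have := hmin' (p + y) ⟨by nlinarith [hy.1.1, hp.1], by linarith⟩
    linarith
  linarith

lemma Kprime {F : ℝ → ℝ} (hF : Continuous F) (h0 : F 0 = 0) (h1 : F 1 = 0)
    {d : ℝ} (hd : Cp F d) :
    ∀ k : ℕ, ∀ x : ℝ, Cp F x → x + k * d = 1 → False := by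
  intro k
  induction k with
  | zero =>
    intro x hx hsum
    simp at hsum
    rw [hsum] at hx
    have := hx.2.2
    rw [h1] at this
    exact lt_irrefl 0 this
  | succ k ih =>
    intro x hx hsum
    push_cast at hsum
    have hd0 : 0 < d := hd.1.1
    have hk : (0:ℝ) ≤ k * d := by positivity
    have hxd : x + d ≤ 1 := by nlinarith
    exact ih (x + d) (add_Cp hF h0 hx hd hxd) (by push_cast; linarith)

lemma mem_chordSet_of_F_eq_zero {F : ℝ → ℝ} (h0 : F 0 = 0) {x : ℝ}
    (hx : x ∈ Set.Icc (0:ℝ) 1) (h : F x = 0) :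
    x ∈ chordSet F := by
  refine ⟨hx, 0, ?_, ?_, ?_⟩ <;> simp [hx.1, hx.2, h0, h]

lemma isClosed_chordSet {F : ℝ → ℝ} (hF : Continuous F) : IsClosed (chordSet F) := by
  set K : Set (ℝ × ℝ) :=
    {p | p.1 ∈ Icc (0:ℝ) 1 ∧ p.2 ∈ Icc (0:ℝ) 1 ∧ p.2 + p.1 ∈ Icc (0:ℝ) 1 ∧
      F p.2 = F (p.2 + p.1)} with hK
  have hKclosed : IsClosed K := by
    apply IsClosed.inter (isClosed_Icc.preimage continuous_fst)
    apply IsClosed.inter (isClosed_Icc.preimage continuous_snd)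
    apply IsClosed.inter (isClosed_Icc.preimage (continuous_snd.add continuous_fst))
    exact isClosed_eq (hF.comp continuous_snd) (hF.comp (continuous_snd.add continuous_fst))
  have hKcompact : IsCompact K := by
    refine ((isCompact_Icc (a := (0:ℝ)) (b := 1)).prod (isCompact_Icc (a := (0:ℝ)) (b := 1))).of_isClosed_subset hKclosed ?_
    rintro ⟨ℓ, s⟩ ⟨h1, h2, -⟩
    exact ⟨h1, h2⟩
  have himg : chordSet F = Prod.fst '' K := by
    ext ℓ
    constructor
    · rintro ⟨hℓ, s, hs, hsl, heq⟩
      exact ⟨(ℓ, s), ⟨hℓ, hs, hsl, heq⟩, rfl⟩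
    · rintro ⟨⟨ℓ', s⟩, ⟨hℓ, hs, hsl, heq⟩, rfl⟩
      exact ⟨hℓ, s, hs, hsl, heq⟩
  rw [himg]
  exact (hKcompact.image continuous_fst).isClosed

lemma split_vol {S : Set ℝ} (hSm : MeasurableSet S) (α β : ℝ) :
    volume (S ∩ Ioo α β) + volume (Ioo α β \ S) = ENNReal.ofReal (β - α) := by
  have := measure_inter_add_diff (μ := volume) (Ioo α β) hSm
  rw [inter_comm] at this
  rw [this, Real.volume_Ioo]

lemma refl_sub {S : Set ℝ} {α β : ℝ}
    (h : ∀ x ∈ Ioo α β, x ∉ S → α + β - x ∈ S) :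
    (fun t => α + β - t) ⁻¹' (Ioo α β \ S) ⊆ S ∩ Ioo α β := by
  intro t ht
  obtain ⟨hIoo, hnS⟩ := ht
  have ha : α < α + β - t := hIoo.1
  have hb : α + β - t < β := hIoo.2
  have h1 : t ∈ Ioo α β := ⟨by linarith, by linarith⟩
  have h2 := h _ hIoo hnS
  rw [show α + β - (α + β - t) = t by ring] at h2
  exact ⟨h2, h1⟩

lemma refl_bound {S : Set ℝ} (hSm : MeasurableSet S) {α β : ℝ}
    (h : ∀ x ∈ Ioo α β, x ∉ S → α + β - x ∈ S) :
    ENNReal.ofReal (β - α) ≤ 2 * volume (S ∩ Ioo α β) := by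
  have hvolR : volume ((fun t => α + β - t) ⁻¹' (Ioo α β \ S)) = volume (Ioo α β \ S) :=
    vol_preimage_const_sub _ _
  have hle : volume (Ioo α β \ S) ≤ volume (S ∩ Ioo α β) := by
    rw [← hvolR]; exact measure_mono (refl_sub h)
  calc ENNReal.ofReal (β - α) = volume (S ∩ Ioo α β) + volume (Ioo α β \ S) :=
        (split_vol hSm α β).symm
    _ ≤ volume (S ∩ Ioo α β) + volume (S ∩ Ioo α β) := by exact add_le_add_right hle _
    _ = 2 * volume (S ∩ Ioo α β) := (two_mul _).symm

lemma refl_bound_strict {S : Set ℝ} (hSm : MeasurableSet S) {α β : ℝ}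
    (h : ∀ x ∈ Ioo α β, x ∉ S → α + β - x ∈ S)
    {p q : ℝ} (hpq : p < q) (hG : Ioo p q ⊆ S ∩ Ioo α β)
    (hdisj : ∀ x ∈ Ioo α β, x ∉ S → α + β - x ∉ Ioo p q) :
    ENNReal.ofReal (β - α) < 2 * volume (S ∩ Ioo α β) := by
  set R : Set ℝ := (fun t => α + β - t) ⁻¹' (Ioo α β \ S) with hR
  have hvolR : volume R = volume (Ioo α β \ S) := vol_preimage_const_sub _ _
  have hDisj : Disjoint R (Ioo p q) := by
    rw [Set.disjoint_left]
    intro a haR haG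
    obtain ⟨hIoo, hnS⟩ := haR
    have := hdisj _ hIoo hnS
    rw [show α + β - (α + β - a) = a by ring] at this
    exact this haG
  have hUnion : R ∪ Ioo p q ⊆ S ∩ Ioo α β := union_subset (refl_sub h) hG
  have hle : volume R + ENNReal.ofReal (q - p) ≤ volume (S ∩ Ioo α β) := by
    rw [← Real.volume_Ioo, ← measure_union hDisj measurableSet_Ioo]
    exact measure_mono hUnion
  have key : ENNReal.ofReal (β - α) + ENNReal.ofReal (q - p) ≤ 2 * volume (S ∩ Ioo α β) := by
    calc ENNReal.ofReal (β - α) + ENNReal.ofReal (q - p)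
        = (volume (S ∩ Ioo α β) + volume (Ioo α β \ S)) + ENNReal.ofReal (q - p) := by
          rw [split_vol hSm α β]
      _ = volume (S ∩ Ioo α β) + (volume (Ioo α β \ S) + ENNReal.ofReal (q - p)) := by ring
      _ = volume (S ∩ Ioo α β) + (volume R + ENNReal.ofReal (q - p)) := by rw [hvolR]
      _ ≤ volume (S ∩ Ioo α β) + volume (S ∩ Ioo α β) := add_le_add_right hle _
      _ = 2 * volume (S ∩ Ioo α β) := (two_mul _).symm
  refine lt_of_lt_of_le ?_ key
  exact ENNReal.lt_add_right (by simp) (by simp [hpq, sub_pos])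

set_option maxHeartbeats 2000000 in
theorem main_aux (F : ℝ → ℝ) (hF : Continuous F) (h0 : F 0 = 0) (h1 : F 1 = 0)
    (d : ℝ) (hd : d ∈ Set.Ioc (0:ℝ) 1) (hdS : d ∉ chordSet F) (hsign : 0 < F d) :
    MeasureTheory.volume (chordSet F ∩ Set.Icc 0 d) > ENNReal.ofReal (d / 2) := by
  obtain ⟨hd0, hd1le⟩ := hd
  set S := chordSet F with hSdef
  have hSclosed : IsClosed S := isClosed_chordSet hF
  have hSm : MeasurableSet S := hSclosed.measurableSet
  have hFne : ∀ x ∈ Icc (0:ℝ) 1, x ∉ S → F x ≠ 0 := fun x hx hxS hFx =>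
    hxS (mem_chordSet_of_F_eq_zero h0 hx hFx)
  have hd1 : d < 1 := by
    rcases lt_or_eq_of_le hd1le with h | h
    · exact h
    · exfalso; rw [h, h1] at hsign; exact lt_irrefl 0 hsign
  have hdp : Cp F d := ⟨⟨hd0, hd1le⟩, hdS, hsign⟩
  -- the integer m with m*d < 1 < (m+1)*d
  set n : ℕ := ⌈1/d⌉₊ with hn
  have hn1 : 1 ≤ n := Nat.one_le_ceil_iff.mpr (by positivity)
  set m : ℕ := n - 1 with hm
  have hmn : (m : ℝ) = (n : ℝ) - 1 := by
    rw [hm, Nat.cast_sub hn1]; simp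
  have hmd : (m : ℝ) * d < 1 := by
    have h2 : (m : ℝ) < 1/d := by
      have : m < n := by omega
      exact_mod_cast (Nat.lt_ceil.mp (by omega))
    calc (m:ℝ) * d < (1/d) * d := by apply mul_lt_mul_of_pos_right h2 hd0
      _ = 1 := by field_simp
  have hmd1 : 1 ≤ ((m : ℝ) + 1) * d := by
    have h2 : (1/d : ℝ) ≤ n := Nat.le_ceil _
    have : ((m:ℝ) + 1) = (n : ℝ) := by rw [hmn]; ring
    rw [this]
    calc (1:ℝ) = (1/d) * d := by field_simp
      _ ≤ (n:ℝ) * d := mul_le_mul_of_nonneg_right h2 (le_of_lt hd0)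
  have hmd1' : 1 < ((m:ℝ) + 1) * d := by
    rcases lt_or_eq_of_le hmd1 with h | h
    · exact h
    · exfalso
      exact Kprime hF h0 h1 hdp m d hdp (by rw [h]; ring)
  have hm1 : 1 ≤ m := by
    by_contra hcon
    push_neg at hcon
    interval_cases m
    · simp at hmd1'; linarith
  have hm1R : (1:ℝ) ≤ (m:ℝ) := by exact_mod_cast hm1
  set e : ℝ := 1 - m * d with he
  have he0 : 0 < e := by rw [he]; linarith
  have hed : e < d := by rw [he]; nlinarith
  have hede : e + d ≤ 1 := by rw [he]; nlinarith
  -- sum lemmas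
  have sum_ed : ∀ x y : ℝ, Cp F x → Cp F y → x + y = e + d → False := by
    intro x y hx hy hxy
    have hsum : Cp F (x + y) := add_Cp hF h0 hx hy (by rw [hxy]; linarith)
    refine Kprime hF h0 h1 hdp (m - 1) (x + y) hsum ?_
    have hc : ((m - 1 : ℕ) : ℝ) = (m : ℝ) - 1 := by rw [Nat.cast_sub hm1]; simp
    rw [hc, hxy, he]; ring
  have sum_e : ∀ x y : ℝ, Cp F x → Cp F y → x + y = e → False := by
    intro x y hx hy hxy
    have hsum : Cp F (x + y) := add_Cp hF h0 hx hy (by rw [hxy]; linarith)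
    refine Kprime hF h0 h1 hdp m (x + y) hsum ?_
    rw [hxy, he]; ring
  -- L1
  have L1 : ∀ x : ℝ, 0 < x → x < e → x ∉ S → Cp F x := by
    intro x h1x h2x hxS
    have hx1 : x ≤ 1 := by linarith
    have hne := hFne x ⟨le_of_lt h1x, hx1⟩ hxS
    rcases lt_or_gt_of_ne hne with hneg | hpos
    · exfalso
      have hcm : Cm F x := ⟨⟨h1x, hx1⟩, hxS, hneg⟩
      have := mixed hF h0 hdp hcm
      linarith
    · exact ⟨⟨h1x, hx1⟩, hxS, hpos⟩
  -- L2
  have L2 : ∀ x ∈ Ioo (0:ℝ) e, x ∉ S → 0 + e - x ∈ S := by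
    intro x hx hxS
    rw [show (0:ℝ) + e - x = e - x by ring]
    by_contra hyS
    exact sum_e x (e - x) (L1 x hx.1 hx.2 hxS)
      (L1 (e - x) (by linarith [hx.2]) (by linarith [hx.1]) hyS) (by ring)
  -- L3
  have L3 : ∀ x ∈ Ioo e d, x ∉ S → e + d - x ∈ S := by
    intro x hx hxS
    by_contra hyS
    have hy1 : e < e + d - x := by linarith [hx.2]
    have hy2 : e + d - x < d := by linarith [hx.1]
    have hx1 : x ≤ 1 := by linarith [hx.2]
    have hx0 : 0 < x := by linarith [hx.1]
    have hyy1 : e + d - x ≤ 1 := by linarith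
    have hyy0 : 0 < e + d - x := by linarith
    have hxne := hFne x ⟨le_of_lt hx0, hx1⟩ hxS
    have hyne := hFne (e + d - x) ⟨le_of_lt hyy0, hyy1⟩ hyS
    rcases lt_or_gt_of_ne hxne with hxneg | hxpos <;>
      rcases lt_or_gt_of_ne hyne with hyneg | hypos
    · -- both negative
      have hcm : Cm F (x + (e + d - x)) :=
        add_Cm hF h0 ⟨⟨hx0, hx1⟩, hxS, hxneg⟩ ⟨⟨hyy0, hyy1⟩, hyS, hyneg⟩ (by linarith)
      rw [show x + (e + d - x) = e + d by ring] at hcm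
      rcases eq_or_lt_of_le hm1R with hm2 | hm2
      · -- m = 1 : e + d = 1
        have : e + d = 1 := by rw [he]; nlinarith [hm2.symm]
        rw [this] at hcm
        have := hcm.2.2
        rw [h1] at this
        exact lt_irrefl 0 this
      · -- m ≥ 2
        have := mixed hF h0 hdp hcm
        have hm2' : (2:ℝ) ≤ (m:ℝ) := by
          have : (1:ℕ) < m := by exact_mod_cast hm2
          exact_mod_cast this
        rw [he] at this
        nlinarith
    · -- x neg, y pos
      have := mixed hF h0 ⟨⟨hyy0, hyy1⟩, hyS, hypos⟩ ⟨⟨hx0, hx1⟩, hxS, hxneg⟩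
      linarith
    · -- x pos, y neg
      have := mixed hF h0 ⟨⟨hx0, hx1⟩, hxS, hxpos⟩ ⟨⟨hyy0, hyy1⟩, hyS, hyneg⟩
      linarith
    · -- both positive
      exact sum_ed x (e + d - x) ⟨⟨hx0, hx1⟩, hxS, hxpos⟩ ⟨⟨hyy0, hyy1⟩, hyS, hypos⟩ (by ring)
  -- epsilon
  have hopen : IsOpen (Sᶜ ∩ {x | 0 < F x}) :=
    hSclosed.isOpen_compl.inter (isOpen_lt continuous_const hF)
  obtain ⟨ε3, hε3pos, hball⟩ := Metric.isOpen_iff.mp hopen d ⟨hdS, hsign⟩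
  set ε : ℝ := min ε3 (min (1 - d) d) with hε
  have hεpos : 0 < ε := by
    apply lt_min hε3pos; apply lt_min <;> linarith
  have hε3' : ε ≤ ε3 := min_le_left _ _
  have hε1d : ε ≤ 1 - d := le_trans (min_le_right _ _) (min_le_left _ _)
  have hεd : ε ≤ d := le_trans (min_le_right _ _) (min_le_right _ _)
  have hzCp : ∀ z : ℝ, |z - d| < ε → Cp F z := by
    intro z hz
    have hmem : z ∈ Sᶜ ∩ {x | 0 < F x} := by
      apply hball
      rw [Metric.mem_ball, Real.dist_eq]
      exact lt_of_lt_of_le hz hε3'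
    have habs := abs_lt.mp hz
    refine ⟨⟨by linarith [habs.1], by linarith [habs.2]⟩, hmem.1, hmem.2⟩
  -- thickening
  have TR : ∀ x : ℝ, 0 < x → x < e → x ∉ S → ∀ δ : ℝ, 0 < δ → δ < x → δ < ε →
      e - x + δ ∈ S := by
    intro x hx0 hxe hxS δ hδ0 hδx hδε
    by_contra hyS
    have hxCp := L1 x hx0 hxe hxS
    have hy' : Cp F (e - x + δ) := L1 _ (by linarith) (by linarith) hyS
    have habs : |d - δ - d| < ε := by
      rw [show d - δ - d = -δ by ring, abs_neg, abs_of_pos hδ0]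
      exact hδε
    have hz : Cp F (d - δ) := hzCp _ habs
    have hw : Cp F (x + (d - δ)) := add_Cp hF h0 hxCp hz (by linarith)
    exact sum_ed _ _ hy' hw (by ring)
  have TL : ∀ x : ℝ, 0 < x → x < e → x ∉ S → ∀ δ : ℝ, 0 < δ → δ < e - x → δ < ε →
      e - x - δ ∈ S := by
    intro x hx0 hxe hxS δ hδ0 hδex hδε
    by_contra hyS
    have hxCp := L1 x hx0 hxe hxS
    have hy' : Cp F (e - x - δ) := L1 _ (by linarith) (by linarith) hyS
    have habs : |d + δ - d| < ε := by
      rw [show d + δ - d = δ by ring, abs_of_pos hδ0]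
      exact hδε
    have hz : Cp F (d + δ) := hzCp _ habs
    have hw : Cp F (x + (d + δ)) := add_Cp hF h0 hxCp hz (by linarith)
    exact sum_ed _ _ hy' hw (by ring)
  -- Main1
  set U0 : Set ℝ := Ioo 0 e \ S with hU0
  have main1 : ENNReal.ofReal e < 2 * volume (S ∩ Ioo 0 e) := by
    rcases eq_empty_or_nonempty U0 with hU | hU
    · have hsub : Ioo (0:ℝ) e ⊆ S := by
        rw [← diff_eq_empty]; exact hU
      rw [inter_eq_right.mpr hsub]
      rw [Real.volume_Ioo]
      rw [two_mul]
      have hne : ENNReal.ofReal (e - 0) ≠ 0 := by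
        simp only [ne_eq, ENNReal.ofReal_eq_zero, not_le]; linarith
      have hnt : ENNReal.ofReal (e - 0) ≠ ⊤ := ENNReal.ofReal_ne_top
      calc ENNReal.ofReal e = ENNReal.ofReal (e - 0) := by norm_num
        _ < ENNReal.ofReal (e - 0) + ENNReal.ofReal (e - 0) :=
            ENNReal.lt_add_right hnt hne
    · have hbddb : BddBelow U0 := ⟨0, fun x hx => le_of_lt hx.1.1⟩
      have hbdda : BddAbove U0 := ⟨e, fun x hx => le_of_lt hx.1.2⟩
      set a : ℝ := sInf U0 with ha
      set b : ℝ := sSup U0 with hb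
      have ha0 : 0 ≤ a := le_csInf hU fun x hx => le_of_lt hx.1.1
      have hbe : b ≤ e := csSup_le hU fun x hx => le_of_lt hx.1.2
      have hab : a ≤ b := csInf_le_csSup hU hbddb hbdda
      have hb0 : 0 < b := by
        obtain ⟨x, hx⟩ := hU
        exact lt_of_lt_of_le hx.1.1 (le_csSup hbdda hx)
      have lower : ∀ x ∈ U0, e - x < ε → e - x ≤ a := by
        intro x hx hclose
        apply le_csInf hU
        intro u hu
        by_contra hcon
        push_neg at hcon
        have huS : u ∈ S := by
          have := TL x hx.1.1 hx.1.2 hx.2 (e - x - u) (by linarith [hu.1.1])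
            (by linarith [hu.1.1]) (by linarith [hu.1.1])
          rw [show e - x - (e - x - u) = u by ring] at this
          exact this
        exact hu.2 huS
      by_cases hcase : b < e
      · -- left gain
        obtain ⟨x, hxU, hxb⟩ := exists_lt_of_lt_csSup hU
          (show b - min ε (e - b) < b by
            have : 0 < min ε (e - b) := lt_min hεpos (by linarith)
            linarith)
        have hxe : x < e := hxU.1.2
        have hx0 : 0 < x := hxU.1.1
        have hxb' : x ≤ b := le_csSup hbdda hxU
        have hkey : min ε (e - b) ≤ min ε (e - x) := by
          apply le_min (min_le_left _ _)
          exact le_trans (min_le_right _ _) (by linarith)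
        refine lt_of_le_of_lt (le_of_eq (by norm_num)) (refl_bound_strict hSm L2
          (p := e - x - min ε (e - x)) (q := e - b) ?_ ?_ ?_)
        · -- p < q
          have : b - x < min ε (e - b) := by linarith
          have h2 : b - x < min ε (e - x) := lt_of_lt_of_le this hkey
          linarith
        · -- Ioo p q ⊆ S ∩ Ioo 0 e
          intro t ht
          obtain ⟨ht1, ht2⟩ := ht
          have hδ1 : 0 < e - x - t := by
            have : t < e - x := by
              have : e - b ≤ e - x := by linarith
              linarith
            linarith
          have hδ2 : e - x - t < min ε (e - x) := by linarith
          have htS : t ∈ S := by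
            have := TL x hx0 hxe hxU.2 (e - x - t) hδ1
              (lt_of_lt_of_le hδ2 (min_le_right _ _))
              (lt_of_lt_of_le hδ2 (min_le_left _ _))
            rw [show e - x - (e - x - t) = t by ring] at this
            exact this
          refine ⟨htS, ?_, ?_⟩
          · have : 0 ≤ e - x - min ε (e - x) := by
              have := min_le_right ε (e - x); linarith
            linarith
          · linarith
        · -- disjointness
          intro u hu huS
          have hub : u ≤ b := le_csSup hbdda ⟨hu, huS⟩
          intro hcon
          have : 0 + e - u < e - b := hcon.2
          linarith
      · -- b = e case: first a > 0, then right gain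
        have hbe' : b = e := le_antisymm hbe (not_lt.mp hcase)
        obtain ⟨x, hxU, hxb⟩ := exists_lt_of_lt_csSup hU
          (show e - min ε e < b by
            rw [hbe']
            have : 0 < min ε e := lt_min hεpos he0
            linarith)
        have hxe : x < e := hxU.1.2
        have hea : e - x ≤ a := by
          apply lower x hxU
          have : e - x < min ε e := by linarith
          exact lt_of_lt_of_le this (min_le_left _ _)
        have ha0' : 0 < a := lt_of_lt_of_le (by linarith) hea
        have hae2 : a < e := by
          obtain ⟨u, hu⟩ := hU
          exact lt_of_le_of_lt (csInf_le hbddb hu) hu.1.2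
        obtain ⟨x', hx'U, hx'a⟩ := exists_lt_of_csInf_lt hU
          (show a < a + min a ε by
            have : 0 < min a ε := lt_min ha0' hεpos
            linarith)
        have hax' : a ≤ x' := csInf_le hbddb hx'U
        have hx'0 : 0 < x' := hx'U.1.1
        have hx'e : x' < e := hx'U.1.2
        have hkey : min a ε ≤ min x' ε := by
          apply le_min _ (min_le_right _ _)
          exact le_trans (min_le_left _ _) hax'
        refine lt_of_le_of_lt (le_of_eq (by norm_num)) (refl_bound_strict hSm L2
          (p := e - a) (q := e - x' + min x' ε) ?_ ?_ ?_)
        · -- p < q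
          have : x' - a < min a ε := by linarith
          have h2 : x' - a < min x' ε := lt_of_lt_of_le this hkey
          linarith
        · -- Ioo p q ⊆ S ∩ Ioo 0 e
          intro t ht
          obtain ⟨ht1, ht2⟩ := ht
          have hδ1 : 0 < t - (e - x') := by
            have : e - x' ≤ e - a := by linarith
            linarith
          have hδ2 : t - (e - x') < min x' ε := by linarith
          have htS : t ∈ S := by
            have := TR x' hx'0 hx'e hx'U.2 (t - (e - x')) hδ1
              (lt_of_lt_of_le hδ2 (min_le_left _ _))
              (lt_of_lt_of_le hδ2 (min_le_right _ _))
            rw [show e - x' + (t - (e - x')) = t by ring] at this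
            exact this
          refine ⟨htS, ?_, ?_⟩
          · have : 0 < e - a := by linarith
            linarith
          · have : min x' ε ≤ x' := min_le_left _ _
            linarith
        · -- disjointness
          intro u hu huS
          have hua : a ≤ u := csInf_le hbddb ⟨hu, huS⟩
          intro hcon
          have : e - a < 0 + e - u := hcon.1
          linarith
  -- Main2
  have main2 : ENNReal.ofReal (d - e) ≤ 2 * volume (S ∩ Ioo e d) :=
    refl_bound hSm L3
  -- assemble
  have hsubset : (S ∩ Ioo 0 e) ∪ (S ∩ Ioo e d) ⊆ S ∩ Icc 0 d := by
    rintro t (⟨hS, ht1, ht2⟩ | ⟨hS, ht1, ht2⟩) <;>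
      exact ⟨hS, ⟨by linarith, by linarith⟩⟩
  have hdisj2 : Disjoint (S ∩ Ioo 0 e) (S ∩ Ioo e d) := by
    rw [Set.disjoint_left]
    rintro t ⟨-, -, h1⟩ ⟨-, h2, -⟩
    linarith
  have hge : volume (S ∩ Ioo 0 e) + volume (S ∩ Ioo e d) ≤ volume (S ∩ Icc 0 d) := by
    rw [← measure_union hdisj2 (hSm.inter measurableSet_Ioo)]
    exact measure_mono hsubset
  have hfinal : ENNReal.ofReal d < 2 * volume (S ∩ Icc 0 d) := by
    calc ENNReal.ofReal d = ENNReal.ofReal e + ENNReal.ofReal (d - e) := by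
          rw [← ENNReal.ofReal_add (le_of_lt he0) (by linarith)]; norm_num
      _ < 2 * volume (S ∩ Ioo 0 e) + ENNReal.ofReal (d - e) :=
          ENNReal.add_lt_add_right ENNReal.ofReal_ne_top main1
      _ ≤ 2 * volume (S ∩ Ioo 0 e) + 2 * volume (S ∩ Ioo e d) := add_le_add_right main2 _
      _ = 2 * (volume (S ∩ Ioo 0 e) + volume (S ∩ Ioo e d)) := by rw [mul_add]
      _ ≤ 2 * volume (S ∩ Icc 0 d) := mul_le_mul_right hge 2
  have h2d : 2 * ENNReal.ofReal (d / 2) = ENNReal.ofReal d := by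
    rw [two_mul, ← ENNReal.ofReal_add (by linarith) (by linarith)]
    norm_num
  rw [gt_iff_lt, ← ENNReal.mul_lt_mul_iff_right (a := 2) (by norm_num) (by norm_num), h2d]
  exact hfinal

end ChordAux

open Set MeasureTheory ChordAux in
theorem stmt10 (f : ℝ → ℝ) (hf : ContinuousOn f (Set.Icc 0 1))
    (h0 : f 0 = 0) (h1 : f 1 = 0) (d : ℝ) (hd : d ∈ Set.Ioc (0:ℝ) 1)
    (hdS : d ∉ chordSet f) :
    MeasureTheory.volume (chordSet f ∩ Set.Icc 0 d) > ENNReal.ofReal (d / 2) := by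
  set F : ℝ → ℝ := IccExtend zero_le_one ((Icc (0:ℝ) 1).restrict f) with hFdef
  have hFcont : Continuous F := (ContinuousOn.restrict hf).Icc_extend'
  have hFeq : ∀ x ∈ Icc (0:ℝ) 1, F x = f x := by
    intro x hx
    rw [hFdef, IccExtend_of_mem _ _ hx]
    rfl
  have hchord : chordSet F = chordSet f := by
    ext ℓ
    constructor
    · rintro ⟨hℓ, s, hs, hsl, heq⟩
      exact ⟨hℓ, s, hs, hsl, by rw [← hFeq s hs, ← hFeq _ hsl]; exact heq⟩
    · rintro ⟨hℓ, s, hs, hsl, heq⟩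
      exact ⟨hℓ, s, hs, hsl, by rw [hFeq s hs, hFeq _ hsl]; exact heq⟩
  have hF0 : F 0 = 0 := by rw [hFeq 0 (by norm_num)]; exact h0
  have hF1 : F 1 = 0 := by rw [hFeq 1 (by norm_num)]; exact h1
  have hdmem : d ∈ Icc (0:ℝ) 1 := ⟨le_of_lt hd.1, hd.2⟩
  have hdSF : d ∉ chordSet F := by rw [hchord]; exact hdS
  have hFdne : F d ≠ 0 := by
    intro hzero
    exact hdSF ⟨hdmem, 0, by norm_num, by norm_num; exact hdmem, by
      rw [zero_add, hF0, hzero]⟩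
  rcases lt_or_gt_of_ne hFdne with hneg | hpos
  · have := main_aux (fun x => - F x) hFcont.neg (by simp [hF0]) (by simp [hF1]) d hd
      (by rw [chordSet_neg]; exact hdSF) (by simpa using hneg)
    rw [chordSet_neg, hchord] at this
    exact this
  · have := main_aux F hFcont hF0 hF1 d hd hdSF hpos
    rw [hchord] at this
    exact this
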